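/- For any signed permutation π in which every strip is positive (i.e., every element appearing in a maximal breakpoint-free segment is positive, equivalently all elements of π are positive), any signed reversal ρ̄(i,j) does not decrease the number of signed reversal breakpoints: Δb(π, ρ̄) ≤ 0. -/

import Mathlib

/-- Extended signed permutation of `{1,…,n}`: `p 0 = 0`, `p (n+1) = n+1`,
the absolute values of `p 1, …, p n` are a bijection onto `{1,…,n}`. -/
def IsExtSignedPerm (n : ℕ) (p : ℕ → ℤ) : Prop :=
  p 0 = 0 ∧ p (n+1) = (n : ℤ) + 1 ∧
  (∀ i, 1 ≤ i → i ≤ n → 1 ≤ |p i| ∧ |p i| ≤ (n : ℤ)) ∧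
  (∀ i j, 1 ≤ i → i ≤ n → 1 ≤ j → j ≤ n → |p i| = |p j| → i = j)

/-- Number of transposition (= signed reversal) breakpoints of the extended
permutation: pairs `(p i, p (i+1))`, `0 ≤ i ≤ n`, with `p (i+1) - p i ≠ 1`. -/
def tBreakpoints (n : ℕ) (p : ℕ → ℤ) : ℕ :=
  ((Finset.range (n+1)).filter (fun i => p (i+1) - p i ≠ 1)).card

/-- The signed reversal ρ̄(i,j): replaces `p_i … p_j` by `-p_j … -p_i`. -/
def applySR (p : ℕ → ℤ) (i j : ℕ) : ℕ → ℤ := fun l =>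
  if i ≤ l ∧ l ≤ j then -p (i + j - l) else p l

theorem stmt4 (n : ℕ) (p : ℕ → ℤ) (hp : IsExtSignedPerm n p)
    (hpos : ∀ i, 1 ≤ i → i ≤ n → 0 < p i)
    (i j : ℕ) (hi : 1 ≤ i) (hij : i ≤ j) (hj : j ≤ n) :
    (tBreakpoints n p : ℤ) - (tBreakpoints n (applySR p i j) : ℤ) ≤ 0 := by
  obtain ⟨h0, hn1, habs, hinj⟩ := hp
  -- every entry in positions 1..n+1 is ≥ 1, and position 0 is 0
  have h1 : ∀ k, 1 ≤ k → k ≤ n+1 → 1 ≤ p k := by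
    intro k hk1 hk2
    rcases Nat.lt_or_ge k (n+1) with h | h
    · have := hpos k hk1 (by omega); omega
    · have hk : k = n+1 := by omega
      subst hk; rw [hn1]; omega
  have h00 : ∀ k, k ≤ n+1 → 0 ≤ p k := by
    intro k hk
    rcases Nat.eq_zero_or_pos k with h | h
    · subst h; omega
    · have := h1 k h hk; omega
  set q := applySR p i j with hq
  suffices hle : tBreakpoints n p ≤ tBreakpoints n q by
    have := Int.ofNat_le.mpr hle; omega
  unfold tBreakpoints
  set g : ℕ → ℕ := fun l => if i ≤ l ∧ l ≤ j-1 then i+j-1-l else l with hg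
  have hgg : ∀ x, g (g x) = x := by
    intro x
    by_cases h : i ≤ x ∧ x ≤ j-1
    · have h2 : i ≤ i+j-1-x ∧ i+j-1-x ≤ j-1 := by omega
      simp only [hg, if_pos h, if_pos h2]; omega
    · simp only [hg, if_neg h, if_neg h]
  apply Finset.card_le_card_of_injOn g
  · intro l hl
    simp only [Finset.mem_coe, Finset.mem_filter, Finset.mem_range] at hl ⊢
    obtain ⟨hlr, hbp⟩ := hl
    by_cases hc : i ≤ l ∧ l ≤ j - 1
    · -- interior: g l = i+j-1-l
      have hgl : g l = i+j-1-l := by simp [hg, hc]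
      refine ⟨by omega, ?_⟩
      rw [hgl]
      have e1 : q (i+j-1-l) = -p (l+1) := by
        have hcond : i ≤ i+j-1-l ∧ i+j-1-l ≤ j := by omega
        have e : i + j - (i+j-1-l) = l+1 := by omega
        simp only [hq, applySR, if_pos hcond, e]
      have e2 : q (i+j-1-l+1) = -p l := by
        have hcond : i ≤ i+j-1-l+1 ∧ i+j-1-l+1 ≤ j := by omega
        have e : i + j - (i+j-1-l+1) = l := by omega
        simp only [hq, applySR, if_pos hcond, e]
      rw [e1, e2]
      intro h; apply hbp; linarith
    · have hgl : g l = l := by simp [hg, hc]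
      rw [hgl]
      refine ⟨hlr, ?_⟩
      rcases Nat.lt_or_ge l i with hli | hli
      · rcases Nat.lt_or_ge (l+1) i with hli1 | hli1
        · -- fully left of the reversal: unchanged
          have e1 : q l = p l := by
            simp only [hq, applySR, if_neg (by omega : ¬(i ≤ l ∧ l ≤ j))]
          have e2 : q (l+1) = p (l+1) := by
            simp only [hq, applySR, if_neg (by omega : ¬(i ≤ l+1 ∧ l+1 ≤ j))]
          rw [e1, e2]; exact hbp
        · -- l = i-1
          have hl' : l + 1 = i := by omega
          have e1 : q l = p l := by
            simp only [hq, applySR, if_neg (by omega : ¬(i ≤ l ∧ l ≤ j))]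
          have e2 : q (l+1) = -p j := by
            have e : i + j - (l+1) = j := by omega
            simp only [hq, applySR, if_pos (by omega : i ≤ l+1 ∧ l+1 ≤ j), e]
          rw [e1, e2]
          have hpj : 1 ≤ p j := h1 j (by omega) (by omega)
          have hpl : 0 ≤ p l := h00 l (by omega)
          intro h; omega
      · -- l ≥ i and ¬(l ≤ j-1), so l ≥ j
        have hlj : j ≤ l := by omega
        rcases Nat.lt_or_ge j l with hjl | hjl
        · -- l > j: unchanged
          have e1 : q l = p l := by
            simp only [hq, applySR, if_neg (by omega : ¬(i ≤ l ∧ l ≤ j))]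
          have e2 : q (l+1) = p (l+1) := by
            simp only [hq, applySR, if_neg (by omega : ¬(i ≤ l+1 ∧ l+1 ≤ j))]
          rw [e1, e2]; exact hbp
        · -- l = j
          have hlj' : l = j := by omega
          have e1 : q l = -p i := by
            have e : i + j - l = i := by omega
            simp only [hq, applySR, if_pos (by omega : i ≤ l ∧ l ≤ j), e]
          have e2 : q (l+1) = p (l+1) := by
            simp only [hq, applySR, if_neg (by omega : ¬(i ≤ l+1 ∧ l+1 ≤ j))]
          rw [e1, e2]
          have hpi : 1 ≤ p i := h1 i hi (by omega)
          have hpl : 1 ≤ p (l+1) := h1 (l+1) (by omega) (by omega)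
          intro h; omega
  · intro a _ b _ hab
    have := congrArg g hab
    rwa [hgg, hgg] at this
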